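/- Let μ, λ ∈ ℝ, a > 0, γ > 1, ρ∞ ≥ 0, and set P∞ = a ρ∞^γ. Let U ⊆ ℝ × ℝ³ be open, let ρ : U → [0,∞) and H : U → ℝ³ be continuously differentiable, and let u : U → ℝ³ be twice continuously differentiable on U. Set P = a ρ^γ, F = (λ+2μ) div u − (P − P∞) − |H|²/2, and u̇ = ∂_t u + (u·∇)u. If the continuity equation ∂_t ρ + div(ρ u) = 0 holds at a point (t,x) ∈ U, then at (t,x): ∂_t F = (2μ+λ) div u̇ − (2μ+λ) ∑_{i,j=1}^{3} ∂_i u^j ∂_j u^i − u·∇F − ((u·∇)H)·H + γ P div u − H·∂_t H. -/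

import Mathlib

noncomputable section

/-- ℝ³, realized as `Fin 3 → ℝ`. -/
abbrev V3 : Type := Fin 3 → ℝ

/-- Spatial partial derivative `∂ᵢ f (t, x)` of a time-dependent scalar field. -/
def spd (i : Fin 3) (f : ℝ × V3 → ℝ) (t : ℝ) (x : V3) : ℝ :=
  fderiv ℝ (fun y => f (t, y)) x (Pi.single i 1)

/-- Spatial gradient `∇f (t, x)` of a time-dependent scalar field. -/
def spgrad (f : ℝ × V3 → ℝ) (t : ℝ) (x : V3) : V3 := fun i => spd i f t x

/-- Spatial partial derivative `∂ᵢ v (t, x)` of a time-dependent vector field. -/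
def spdv (i : Fin 3) (v : ℝ × V3 → V3) (t : ℝ) (x : V3) : V3 :=
  fderiv ℝ (fun y => v (t, y)) x (Pi.single i 1)

/-- Spatial divergence `div v (t, x)` of a time-dependent vector field. -/
def spdiv (v : ℝ × V3 → V3) (t : ℝ) (x : V3) : ℝ := ∑ i, spdv i v t x i

/-- Spatial curl `curl v (t, x)` of a time-dependent vector field (0-based indices). -/
def spcurl (v : ℝ × V3 → V3) (t : ℝ) (x : V3) : V3 :=
  ![spdv 1 v t x 2 - spdv 2 v t x 1,
    spdv 2 v t x 0 - spdv 0 v t x 2,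
    spdv 0 v t x 1 - spdv 1 v t x 0]

/-- Time derivative `∂ₜ f (t, x)` of a time-dependent scalar field. -/
def pdt (f : ℝ × V3 → ℝ) (t : ℝ) (x : V3) : ℝ := deriv (fun s => f (s, x)) t

/-- Time derivative `∂ₜ v (t, x)` of a time-dependent vector field. -/
def pdtv (v : ℝ × V3 → V3) (t : ℝ) (x : V3) : V3 := deriv (fun s => v (s, x)) t

/-- Cross product in ℝ³. -/
def cross3 (a b : V3) : V3 :=
  ![a 1 * b 2 - a 2 * b 1, a 2 * b 0 - a 0 * b 2, a 0 * b 1 - a 1 * b 0]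

/- ### Auxiliary material -/

/-- time direction -/
def Et : ℝ × V3 := (1, 0)

/-- spatial coordinate directions -/
def E3 (i : Fin 3) : ℝ × V3 := (0, Pi.single i 1)

lemma hasDerivAt_fixsnd (t : ℝ) (x : V3) :
    HasDerivAt (fun s : ℝ => ((s, x) : ℝ × V3)) Et t :=
  (hasDerivAt_id t).prodMk (hasDerivAt_const t x)

lemma hasFDerivAt_fixfst (t : ℝ) (x : V3) :
    HasFDerivAt (fun y : V3 => ((t, y) : ℝ × V3)) (ContinuousLinearMap.inr ℝ ℝ V3) x :=
  (hasFDerivAt_const t x).prodMk (hasFDerivAt_id x)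

lemma pdt_eq {f : ℝ × V3 → ℝ} {Φ : (ℝ × V3) →L[ℝ] ℝ} {t : ℝ} {x : V3}
    (h : HasFDerivAt f Φ (t, x)) : pdt f t x = Φ Et :=
  (h.comp_hasDerivAt t (hasDerivAt_fixsnd t x)).deriv

lemma pdtv_eq {f : ℝ × V3 → V3} {Φ : (ℝ × V3) →L[ℝ] V3} {t : ℝ} {x : V3}
    (h : HasFDerivAt f Φ (t, x)) : pdtv f t x = Φ Et :=
  (h.comp_hasDerivAt t (hasDerivAt_fixsnd t x)).deriv

lemma spd_eq {f : ℝ × V3 → ℝ} {Φ : (ℝ × V3) →L[ℝ] ℝ} {t : ℝ} {x : V3}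
    (h : HasFDerivAt f Φ (t, x)) (i : Fin 3) : spd i f t x = Φ (E3 i) := by
  have h2 : HasFDerivAt (fun y => f (t, y))
      (Φ.comp (ContinuousLinearMap.inr ℝ ℝ V3)) x := h.comp x (hasFDerivAt_fixfst t x)
  simp [spd, h2.fderiv, E3]

lemma spdv_eq {f : ℝ × V3 → V3} {Φ : (ℝ × V3) →L[ℝ] V3} {t : ℝ} {x : V3}
    (h : HasFDerivAt f Φ (t, x)) (i : Fin 3) : spdv i f t x = Φ (E3 i) := by
  have h2 : HasFDerivAt (fun y => f (t, y))
      (Φ.comp (ContinuousLinearMap.inr ℝ ℝ V3)) x := h.comp x (hasFDerivAt_fixfst t x)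
  simp [spdv, h2.fderiv, E3]

lemma spfderiv_eq {f : ℝ × V3 → V3} {Φ : (ℝ × V3) →L[ℝ] V3} {t : ℝ} {x : V3}
    (h : HasFDerivAt f Φ (t, x)) (v : V3) :
    fderiv ℝ (fun y => f (t, y)) x v = Φ (0, v) := by
  have h2 : HasFDerivAt (fun y => f (t, y))
      (Φ.comp (ContinuousLinearMap.inr ℝ ℝ V3)) x := h.comp x (hasFDerivAt_fixfst t x)
  simp [h2.fderiv]

lemma pair_decomp (v : V3) : ((0 : ℝ), v) = ∑ j, v j • E3 j := by
  have h1 : (∑ j, v j • E3 j).1 = 0 := by rw [Prod.fst_sum]; simp [E3]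
  have h2 : (∑ j, v j • E3 j).2 = v := by
    simp only [Prod.snd_sum, E3, Prod.smul_mk]
    funext l
    simp [Finset.sum_apply, Pi.single_apply, mul_comm]
  exact Prod.ext h1.symm h2.symm

lemma clm_pair_decomp (L : (ℝ × V3) →L[ℝ] V3) (v : V3) (k : Fin 3) :
    L (0, v) k = ∑ j, v j * L (E3 j) k := by
  rw [pair_decomp v, map_sum]
  simp [Finset.sum_apply]

lemma clm_pair_decomp' (L : (ℝ × V3) →L[ℝ] ℝ) (v : V3) :
    L (0, v) = ∑ j, v j * L (E3 j) := by
  rw [pair_decomp v, map_sum]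
  simp

/-- Time derivative of the effective viscous flux
`F = (λ+2μ) div u − (P − P∞) − |H|²/2`: if the continuity equation holds at `(t, x)`,
then `∂ₜF = (2μ+λ) div u̇ − (2μ+λ) ∑ᵢⱼ ∂ᵢuʲ ∂ⱼuⁱ − u·∇F − ((u·∇)H)·H + γ P div u − H·∂ₜH`
at `(t, x)`, where `u̇ = ∂ₜu + (u·∇)u` is the material derivative. -/
theorem effective_viscous_flux_time_derivative
    (μ lam a γ ρ_inf : ℝ) (ha : 0 < a) (hγ : 1 < γ) (hρ_inf : 0 ≤ ρ_inf)
    (U : Set (ℝ × V3)) (hU : IsOpen U)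
    (ρ : ℝ × V3 → ℝ) (u H : ℝ × V3 → V3)
    (hρnonneg : ∀ p ∈ U, 0 ≤ ρ p)
    (hρ : ContDiffOn ℝ 1 ρ U) (hH : ContDiffOn ℝ 1 H U) (hu : ContDiffOn ℝ 2 u U)
    (t : ℝ) (x : V3) (hmem : (t, x) ∈ U)
    -- continuity equation `∂ₜρ + div (ρ u) = 0` at `(t, x)`
    (hcont : pdt ρ t x + spdiv (fun p => ρ p • u p) t x = 0) :
    pdt (fun p => (lam + 2 * μ) * spdiv u p.1 p.2
          - (a * ρ p ^ γ - a * ρ_inf ^ γ) - (∑ i, (H p i) ^ 2) / 2) t x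
      = (2 * μ + lam) * spdiv
            (fun p => pdtv u p.1 p.2 + fderiv ℝ (fun y => u (p.1, y)) p.2 (u p)) t x
        - (2 * μ + lam) * (∑ i, ∑ j, spdv i u t x j * spdv j u t x i)
        - (∑ i, u (t, x) i * spd i (fun p => (lam + 2 * μ) * spdiv u p.1 p.2
            - (a * ρ p ^ γ - a * ρ_inf ^ γ) - (∑ k, (H p k) ^ 2) / 2) t x)
        - (∑ i, fderiv ℝ (fun y => H (t, y)) x (u (t, x)) i * H (t, x) i)
        + γ * (a * ρ (t, x) ^ γ) * spdiv u t x
        - (∑ i, H (t, x) i * pdtv H t x i) := by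
  have hUnhds : U ∈ nhds (t, x) := hU.mem_nhds hmem
  -- differentiability facts
  have huD : ∀ p ∈ U, HasFDerivAt u (fderiv ℝ u p) p := fun p hp =>
    ((hu.contDiffAt (hU.mem_nhds hp)).differentiableAt (by norm_num)).hasFDerivAt
  have hu1 : ContDiffOn ℝ 1 (fderiv ℝ u) U := hu.fderiv_of_isOpen hU (by norm_num)
  set B := fderiv ℝ (fderiv ℝ u) (t, x) with hBdef
  set A := fderiv ℝ u (t, x) with hAdef
  set R := fderiv ℝ ρ (t, x) with hRdef
  set Hd := fderiv ℝ H (t, x) with hHdef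
  have hU2 : HasFDerivAt (fderiv ℝ u) B (t, x) :=
    ((hu1.contDiffAt hUnhds).differentiableAt one_ne_zero).hasFDerivAt
  have hU1 : HasFDerivAt u A (t, x) := huD _ hmem
  have hRd : HasFDerivAt ρ R (t, x) :=
    ((hρ.contDiffAt hUnhds).differentiableAt one_ne_zero).hasFDerivAt
  have hHd : HasFDerivAt H Hd (t, x) :=
    ((hH.contDiffAt hUnhds).differentiableAt one_ne_zero).hasFDerivAt
  -- symmetry of the second derivative of u
  have hsym : ∀ v w, B v w = B w v := fun v w =>
    second_derivative_symmetric_of_eventually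
      (Filter.eventually_of_mem hUnhds huD) hU2 v w
  have hsymc : ∀ v w k, B v w k = B w v k := fun v w k => congrFun (hsym v w) k
  -- pointwise identity for spdiv u on U
  have hWU : ∀ p ∈ U, spdiv u p.1 p.2 = ∑ k, fderiv ℝ u p (E3 k) k := by
    intro p hp
    obtain ⟨s, y⟩ := p
    exact Finset.sum_congr rfl fun k _ => by rw [spdv_eq (huD _ hp) k]
  -- derivative of the divergence field
  have hevW : (fun p : ℝ × V3 => spdiv u p.1 p.2)
      =ᶠ[nhds (t, x)] fun p => ∑ k, fderiv ℝ u p (E3 k) k :=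
    Filter.eventually_of_mem hUnhds hWU
  have hWterm : ∀ k : Fin 3, HasFDerivAt (fun p : ℝ × V3 => fderiv ℝ u p (E3 k) k)
      ((ContinuousLinearMap.proj k).comp
        ((fderiv ℝ u (t, x)).comp (0 : (ℝ × V3) →L[ℝ] (ℝ × V3)) + B.flip (E3 k))) (t, x) :=
    fun k => (ContinuousLinearMap.proj (R := ℝ) (φ := fun _ : Fin 3 => ℝ) k).hasFDerivAt.comp
      (t, x) (hU2.clm_apply (hasFDerivAt_const (E3 k) (t, x)))
  have hW : HasFDerivAt (fun p : ℝ × V3 => spdiv u p.1 p.2)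
      (∑ k, (ContinuousLinearMap.proj k).comp
        ((fderiv ℝ u (t, x)).comp (0 : (ℝ × V3) →L[ℝ] (ℝ × V3)) + B.flip (E3 k))) (t, x) :=
    (HasFDerivAt.sum (fun k _ => hWterm k)).congr_of_eventuallyEq hevW
  -- components of H
  have hHcomp : ∀ i : Fin 3, HasFDerivAt (fun p => H p i)
      ((ContinuousLinearMap.proj i).comp Hd) (t, x) :=
    fun i => (ContinuousLinearMap.proj (R := ℝ) (φ := fun _ : Fin 3 => ℝ) i).hasFDerivAt.comp
      (t, x) hHd
  -- pressure
  have hrpow : HasDerivAt (fun z : ℝ => z ^ γ) (γ * ρ (t, x) ^ (γ - 1)) (ρ (t, x)) :=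
    Real.hasDerivAt_rpow_const (Or.inr hγ.le)
  have hPd : HasFDerivAt (fun p => a * ρ p ^ γ)
      (a • ((γ * ρ (t, x) ^ (γ - 1)) • R)) (t, x) :=
    (hrpow.comp_hasFDerivAt (t, x) hRd).const_mul a
  -- the flux F: nice version
  have hSd := HasFDerivAt.sum (u := (Finset.univ : Finset (Fin 3)))
    (fun i _ => (hHcomp i).mul (hHcomp i))
  have hGnice := (((hW.const_mul (lam + 2 * μ)).sub (hPd.sub_const (a * ρ_inf ^ γ))).sub
    (hSd.const_mul (1 / 2 : ℝ)))
  have hevG : (fun p : ℝ × V3 => (lam + 2 * μ) * spdiv u p.1 p.2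
        - (a * ρ p ^ γ - a * ρ_inf ^ γ) - (∑ i, (H p i) ^ 2) / 2)
      =ᶠ[nhds (t, x)] (fun p : ℝ × V3 => (lam + 2 * μ) * spdiv u p.1 p.2
        - (a * ρ p ^ γ - a * ρ_inf ^ γ) - (1 / 2 : ℝ) * ∑ i, H p i * H p i) := by
    filter_upwards with p
    congr 1
    rw [Finset.mul_sum]
    rw [Finset.sum_div]
    exact Finset.sum_congr rfl fun i _ => by ring
  have hG := hGnice.congr_of_eventuallyEq hevG
  -- the material derivative field
  have hevM : (fun p : ℝ × V3 => pdtv u p.1 p.2 + fderiv ℝ (fun y => u (p.1, y)) p.2 (u p))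
      =ᶠ[nhds (t, x)] fun p => fderiv ℝ u p Et + fderiv ℝ u p (0, u p) := by
    filter_upwards [hUnhds] with p hp
    obtain ⟨s, y⟩ := p
    rw [pdtv_eq (huD _ hp), spfderiv_eq (huD _ hp) (u (s, y))]
  have hM1 := hU2.clm_apply (hasFDerivAt_const Et (t, x))
  have hM2 := hU2.clm_apply
    ((hasFDerivAt_const (0 : ℝ) (t, x)).prodMk hU1 :
      HasFDerivAt (fun p : ℝ × V3 => ((0 : ℝ), u p)) _ (t, x))
  have hM := (hM1.add hM2).congr_of_eventuallyEq hevM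
  -- product ρ • u
  have hρu : HasFDerivAt (fun p => ρ p • u p) (ρ (t, x) • A + R.smulRight (u (t, x))) (t, x) :=
    hRd.smul hU1
  -- rpow algebra
  have hpow : ρ (t, x) ^ (γ - 1) * ρ (t, x) = ρ (t, x) ^ γ := by
    rcases eq_or_lt_of_le (hρnonneg _ hmem) with h0 | h0
    · rw [← h0]
      rw [Real.zero_rpow (by linarith), Real.zero_rpow (by linarith), mul_zero]
    · calc ρ (t, x) ^ (γ - 1) * ρ (t, x)
          = ρ (t, x) ^ (γ - 1) * ρ (t, x) ^ (1 : ℝ) := by rw [Real.rpow_one]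
        _ = ρ (t, x) ^ (γ - 1 + 1) := (Real.rpow_add h0 _ _).symm
        _ = ρ (t, x) ^ γ := by norm_num
  -- transform the continuity equation
  rw [pdt_eq hRd] at hcont
  simp only [spdiv, spdv_eq hρu, ContinuousLinearMap.add_apply, ContinuousLinearMap.coe_smul',
    Pi.smul_apply, ContinuousLinearMap.smulRight_apply, smul_eq_mul,
    Finset.sum_apply, Pi.add_apply, Pi.zero_apply] at hcont
  -- rewrite the goal in terms of the derivatives at (t, x)
  rw [pdt_eq hG, pdtv_eq hHd, spfderiv_eq hHd (u (t, x))]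
  simp only [spd_eq hG]
  simp only [spdiv, spdv_eq hU1, spdv_eq hM]
  -- evaluate all the continuous linear map expressions
  simp only [ContinuousLinearMap.add_apply, ContinuousLinearMap.sub_apply,
    ContinuousLinearMap.coe_smul', Pi.smul_apply, ContinuousLinearMap.coe_sum',
    Finset.sum_apply, ContinuousLinearMap.coe_comp', Function.comp_apply,
    ContinuousLinearMap.flip_apply, ContinuousLinearMap.proj_apply,
    ContinuousLinearMap.zero_apply, map_zero, ContinuousLinearMap.prod_apply,
    ContinuousLinearMap.smulRight_apply, smul_eq_mul, Pi.add_apply, Pi.zero_apply]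
  rw [← hAdef]
  -- decompose pairs (0, v) in the canonical basis
  simp only [clm_pair_decomp, clm_pair_decomp']
  -- use the symmetry of the second derivative
  have hsw : ∀ k : Fin 3, B (E3 k) Et = B Et (E3 k) := fun k => hsym _ _
  have hs10 : B (E3 1) (E3 0) = B (E3 0) (E3 1) := hsym _ _
  have hs20 : B (E3 2) (E3 0) = B (E3 0) (E3 2) := hsym _ _
  have hs21 : B (E3 2) (E3 1) = B (E3 1) (E3 2) := hsym _ _
  simp only [Fin.sum_univ_three] at hcont ⊢
  simp only [hsw, hs10, hs20, hs21]
  linear_combination (-(a * γ * ρ (t, x) ^ (γ - 1))) * hcont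
    + (γ * a * (A (E3 0) 0 + A (E3 1) 1 + A (E3 2) 2)) * hpow

end
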